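/- Let A be a commutative ring and let K be a bounded cochain complex of A-modules such that for every integer i the cohomology module H^i(K) is a projective A-module. Then there exists a quasi-isomorphism of cochain complexes φ : H → K, where H is the cochain complex whose term in degree i is H^i(K) and whose differentials are all zero. -/

import Mathlib

open CategoryTheory CategoryTheory.Limits

universe u

/-- The cochain complex whose term in degree `i` is the `i`-th cohomology module
`H^i(K)` of `K`, with all differentials equal to zero. -/
noncomputable def gradedHomologyComplex {A : Type u} [CommRing A]
    (K : CochainComplex (ModuleCat.{u} A) ℤ) : CochainComplex (ModuleCat.{u} A) ℤ where
  X i := K.homology i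
  d _ _ := 0
  shape _ _ _ := rfl
  d_comp_d' := by intros; simp

/-- Let `A` be a commutative ring and `K` a bounded cochain complex of
`A`-modules such that every cohomology module `H^i(K)` is projective. Then there is a
quasi-isomorphism `φ : H ⟶ K`, where `H` is the complex with terms `H^i(K)` and zero
differentials. -/
theorem split_lem_2_1_modules {A : Type u} [CommRing A]
    (K : CochainComplex (ModuleCat.{u} A) ℤ)
    (hbdd : ∃ a b : ℤ, ∀ i : ℤ, (i < a ∨ b < i) → IsZero (K.X i))
    (hproj : ∀ i : ℤ, Projective (K.homology i)) :
    ∃ φ : gradedHomologyComplex K ⟶ K, QuasiIso φ := by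
  -- a section of the projection `cycles i ⟶ homology i`, using projectivity
  have := hproj
  let s : ∀ i : ℤ, (K.homology i ⟶ K.cycles i) := fun i =>
    Projective.factorThru (𝟙 (K.homology i)) (K.homologyπ i)
  have hs : ∀ i : ℤ, s i ≫ K.homologyπ i = 𝟙 _ := fun i =>
    Projective.factorThru_comp _ _
  let φ : gradedHomologyComplex K ⟶ K :=
    { f := fun i => s i ≫ K.iCycles i
      comm' := by
        intro i j _
        show _ = 0 ≫ _
        erw [zero_comp, Category.assoc, K.iCycles_d, comp_zero] }
  refine ⟨φ, ⟨fun i => ?_⟩⟩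
  rw [quasiIsoAt_iff_isIso_homologyMap]
  have hcyc : HomologicalComplex.cyclesMap φ i = (gradedHomologyComplex K).iCycles i ≫ s i := by
    erw [← cancel_mono (K.iCycles i), HomologicalComplex.cyclesMap_i, Category.assoc]
  have key : (gradedHomologyComplex K).homologyπ i ≫ HomologicalComplex.homologyMap φ i =
      (gradedHomologyComplex K).iCycles i := by
    erw [HomologicalComplex.homologyπ_naturality, hcyc, Category.assoc, hs]
    exact Category.comp_id _
  have h1 : IsIso ((gradedHomologyComplex K).homologyπ i) :=
    (gradedHomologyComplex K).isIso_homologyπ (i - 1) i (by simp) rfl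
  have h2 : IsIso ((gradedHomologyComplex K).iCycles i) :=
    (gradedHomologyComplex K).isIso_iCycles i (i + 1) (by simp) rfl
  have : HomologicalComplex.homologyMap φ i =
      inv ((gradedHomologyComplex K).homologyπ i) ≫ (gradedHomologyComplex K).iCycles i := by
    erw [← key, IsIso.inv_hom_id_assoc]
  rw [this]
  exact @IsIso.comp_isIso _ _ _ _ _ _ _ inferInstance h2
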